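/- Let g = ⊕_j g_j be a good grading for a nilpotent e in a finite-dimensional semisimple Lie algebra, let l ⊆ g_{-1} be a subspace isotropic for ω(x,y) = κ(e,[x,y]), and set m = l ⊕ (⊕_{j ≤ -2} g_j). Then m is a Lie subalgebra of g, and the linear functional χ = κ(e, ·) vanishes on [m, m], i.e. χ restricts to a Lie algebra character of m. -/

import Mathlib

/-- For a good grading of a nilpotent `e` and an isotropic subspace `l ⊆ g (-1)` for
`ω(x,y) = κ(e,[x,y])`, the space `m = l ⊕ (⊕_{j ≤ -2} g j)` is a Lie subalgebra and
`χ = κ(e, ·)` vanishes on `[m, m]`, i.e. restricts to a character of `m`. -/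
theorem stmt_11 {K L : Type*} [Field K] [IsAlgClosed K] [CharZero K]
    [LieRing L] [LieAlgebra K L] [Module.Finite K L] [LieAlgebra.IsSemisimple K L]
    (G : ℤ → Submodule K L) (hdecomp : DirectSum.IsInternal G)
    (hbr : ∀ i j : ℤ, ∀ x ∈ G i, ∀ y ∈ G j, ⁅x, y⁆ ∈ G (i + j))
    (e : L) (he : e ∈ G 2)
    (hinj : ∀ j : ℤ, j ≤ -1 → ∀ x ∈ G j, ⁅e, x⁆ = 0 → x = 0)
    (l : Submodule K L) (hl : l ≤ G (-1))
    (hiso : ∀ x ∈ l, ∀ y ∈ l, killingForm K L e ⁅x, y⁆ = 0)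
    (m : Submodule K L) (hm : m = l ⊔ ⨆ j ∈ Set.Iic (-2 : ℤ), G j) :
    (∀ x ∈ m, ∀ y ∈ m, ⁅x, y⁆ ∈ m) ∧
    (∀ x ∈ m, ∀ y ∈ m, killingForm K L e ⁅x, y⁆ = 0) := by
  classical
  set N : Submodule K L := ⨆ j ∈ Set.Iic (-2 : ℤ), G j with hN
  -- induction principle for membership in N
  have hNind : ∀ (C : L → Prop), (∀ j ≤ (-2:ℤ), ∀ x ∈ G j, C x) → C 0 →
      (∀ x y, C x → C y → C (x + y)) → ∀ z ∈ N, C z := by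
    intro C hmem h0 hadd z hz
    have hz' : z ∈ ⨆ (j : (Set.Iic (-2:ℤ) : Set ℤ)), G (j : ℤ) := by
      rwa [iSup_subtype'' (Set.Iic (-2:ℤ)) G] at *
    exact Submodule.iSup_induction _ (motive := C) hz'
      (fun j x hx => hmem j j.2 x hx) h0 hadd
  have hGN : ∀ j : ℤ, j ≤ -2 → G j ≤ N := by
    intro j hj
    exact le_biSup G hj
  -- orthogonality of e with homogeneous components of degree ≠ -2
  have hχ : ∀ j : ℤ, j ≠ -2 → ∀ z ∈ G j, killingForm K L e z = 0 := by
    intro j hj z hz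
    rw [killingForm_apply_apply]
    refine LinearMap.trace_eq_zero_of_mapsTo_ne hdecomp (fun i => i + (2 + j))
      (fun i => show i + (2 + j) ≠ i by omega) ?_
    intro i u hu
    simp only [SetLike.mem_coe] at hu ⊢
    have h1 : ⁅z, u⁆ ∈ G (j + i) := hbr j i z hz u hu
    have h2 : ⁅e, ⁅z, u⁆⁆ ∈ G (2 + (j + i)) := hbr 2 (j + i) e he _ h1
    have heq : i + (2 + j) = 2 + (j + i) := by ring
    rw [heq]
    simpa [LieAlgebra.ad_apply] using h2
  -- χ vanishes on all of G j for j ≤ -3 and hence, by linearity, on sums thereof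
  have hχN : ∀ z ∈ N, ∀ w ∈ N, killingForm K L e ⁅z, w⁆ = 0 := by
    intro z hz
    refine hNind (fun z => ∀ w ∈ N, killingForm K L e ⁅z, w⁆ = 0) ?_ ?_ ?_ z hz
    · intro j hj x hx
      refine hNind (fun w => killingForm K L e ⁅x, w⁆ = 0) ?_ ?_ ?_
      · intro i hi y hy
        exact hχ (j + i) (by omega) _ (hbr j i x hx y hy)
      · simp
      · intro a b ha hb
        rw [lie_add, map_add, ha, hb, add_zero]
    · intro w hw; simp
    · intro a b ha hb w hw
      rw [add_lie, map_add, ha w hw, hb w hw, add_zero]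
  have hχlN : ∀ a ∈ l, ∀ w ∈ N, killingForm K L e ⁅a, w⁆ = 0 := by
    intro a ha
    refine hNind (fun w => killingForm K L e ⁅a, w⁆ = 0) ?_ ?_ ?_
    · intro j hj y hy
      exact hχ (-1 + j) (by omega) _ (hbr (-1) j a (hl ha) y hy)
    · simp
    · intro x y hx hy
      rw [lie_add, map_add, hx, hy, add_zero]
  -- bracket closure pieces
  have hll : ∀ a ∈ l, ∀ b ∈ l, ⁅a, b⁆ ∈ N := by
    intro a ha b hb
    exact hGN (-2) le_rfl (by simpa using hbr (-1) (-1) a (hl ha) b (hl hb))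
  have hlN : ∀ a ∈ l, ∀ w ∈ N, ⁅a, w⁆ ∈ N := by
    intro a ha
    refine hNind (fun w => ⁅a, w⁆ ∈ N) ?_ (by simp) ?_
    · intro j hj y hy
      exact hGN (-1 + j) (by omega) (hbr (-1) j a (hl ha) y hy)
    · intro x y hx hy
      rw [lie_add]; exact add_mem hx hy
  have hNN : ∀ z ∈ N, ∀ w ∈ N, ⁅z, w⁆ ∈ N := by
    refine hNind (fun z => ∀ w ∈ N, ⁅z, w⁆ ∈ N) ?_ (by simp) ?_
    · intro j hj x hx
      refine hNind (fun w => ⁅x, w⁆ ∈ N) ?_ (by simp) ?_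
      · intro i hi y hy
        exact hGN (j + i) (by omega) (hbr j i x hx y hy)
      · intro u v hu hv; rw [lie_add]; exact add_mem hu hv
    · intro u v hu hv w hw; rw [add_lie]; exact add_mem (hu w hw) (hv w hw)
  -- decompose membership in m
  have hmm : ∀ x ∈ m, ∃ a ∈ l, ∃ b ∈ N, x = a + b := by
    intro x hx
    rw [hm] at hx
    rcases Submodule.mem_sup.mp hx with ⟨a, ha, b, hb, rfl⟩
    exact ⟨a, ha, b, hb, rfl⟩
  have hNm : N ≤ m := by rw [hm]; exact le_sup_right
  constructor
  · intro x hx y hy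
    obtain ⟨a, ha, b, hb, rfl⟩ := hmm x hx
    obtain ⟨c, hc, d, hd, rfl⟩ := hmm y hy
    have : ⁅a + b, c + d⁆ = ⁅a, c⁆ + ⁅a, d⁆ + (⁅b, c⁆ + ⁅b, d⁆) := by
      rw [add_lie, lie_add, lie_add]
    rw [this]
    have hbc : ⁅b, c⁆ ∈ N := (lie_skew b c) ▸ neg_mem (hlN c hc b hb)
    exact hNm (add_mem (add_mem (hll a ha c hc) (hlN a ha d hd))
      (add_mem hbc (hNN b hb d hd)))
  · intro x hx y hy
    obtain ⟨a, ha, b, hb, rfl⟩ := hmm x hx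
    obtain ⟨c, hc, d, hd, rfl⟩ := hmm y hy
    have hsplit : ⁅a + b, c + d⁆ = ⁅a, c⁆ + ⁅a, d⁆ + (⁅b, c⁆ + ⁅b, d⁆) := by
      rw [add_lie, lie_add, lie_add]
    have hbc : killingForm K L e ⁅b, c⁆ = 0 := by
      have := hχlN c hc b hb
      rw [← lie_skew b c, map_neg, this, neg_zero]
    rw [hsplit, map_add, map_add, map_add, hiso a ha c hc, hχlN a ha d hd, hbc,
      hχN b hb d hd]
    simp
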